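/- Let X be a real-valued random variable on a probability space whose cumulative distribution function G_X (defined by G_X(x) = P(X ≤ x)) is continuous. Then the random variable G_X(X) is uniformly distributed on the interval [0,1], i.e. the pushforward of the law of X under G_X is the uniform (Lebesgue) probability measure on [0,1]. -/

import Mathlib

open MeasureTheory Set Filter Topology ProbabilityTheory

/-- If the cdf `G` of a real random variable `X` is continuous, then the
copula transform `G ∘ X` is uniformly distributed on `[0,1]`. -/
theorem copula_transform_uniform
    {Ω : Type*} [MeasurableSpace Ω] (μ : Measure Ω) [IsProbabilityMeasure μ]
    (X : Ω → ℝ) (hX : Measurable X)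
    (G : ℝ → ℝ) (hG : ∀ x, G x = (μ {ω | X ω ≤ x}).toReal)
    (hGcont : Continuous G) :
    Measure.map (fun ω => G (X ω)) μ = volume.restrict (Icc (0 : ℝ) 1) := by
  set ν : Measure ℝ := Measure.map X μ with hν
  haveI : IsProbabilityMeasure ν := Measure.isProbabilityMeasure_map hX.aemeasurable
  have hν_Iic : ∀ x : ℝ, ν (Iic x) = μ {ω | X ω ≤ x} := fun x => by
    rw [hν, Measure.map_apply hX measurableSet_Iic]; rfl
  have hGeq : ∀ x, G x = cdf ν x := fun x => by
    rw [hG, cdf_eq_real, measureReal_def, hν_Iic]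
  have hGfun : G = cdf ν := funext hGeq
  have hG0 : ∀ x, 0 ≤ G x := fun x => hGfun ▸ cdf_nonneg ν x
  have hG1 : ∀ x, G x ≤ 1 := fun x => hGfun ▸ cdf_le_one ν x
  have hGmono : Monotone G := hGfun ▸ monotone_cdf ν
  have htop : Tendsto G atTop (𝓝 1) := hGfun ▸ tendsto_cdf_atTop ν
  have hbot : Tendsto G atBot (𝓝 0) := hGfun ▸ tendsto_cdf_atBot ν
  have hν_eq : ∀ x : ℝ, ν (Iic x) = ENNReal.ofReal (G x) := fun x => by
    rw [hGfun, ofReal_cdf]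
  have hmeas : Measurable fun ω => G (X ω) := hGcont.measurable.comp hX
  haveI : IsProbabilityMeasure (Measure.map (fun ω => G (X ω)) μ) :=
    Measure.isProbabilityMeasure_map hmeas.aemeasurable
  refine Measure.ext_of_Iic _ _ fun t => ?_
  -- RHS computation
  have hRHS : volume.restrict (Icc (0 : ℝ) 1) (Iic t) = ENNReal.ofReal (min t 1) := by
    rw [Measure.restrict_apply measurableSet_Iic]
    have : Iic t ∩ Icc (0 : ℝ) 1 = Icc 0 (min t 1) := by
      ext x
      simp only [mem_inter_iff, mem_Iic, mem_Icc, le_min_iff]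
      constructor
      · rintro ⟨h1, h2, h3⟩; exact ⟨h2, h1, h3⟩
      · rintro ⟨h1, h2, h3⟩; exact ⟨h2, h1, h3⟩
    rw [this, Real.volume_Icc, sub_zero]
  rw [hRHS, Measure.map_apply hmeas measurableSet_Iic]
  have hpre : (fun ω => G (X ω)) ⁻¹' Iic t = X ⁻¹' (G ⁻¹' Iic t) := rfl
  rw [hpre, ← Measure.map_apply hX (hGcont.measurable measurableSet_Iic), ← hν]
  set A : Set ℝ := G ⁻¹' Iic t with hA
  rcases lt_or_ge t 0 with ht | ht
  · -- t < 0 : A is empty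
    have hAe : A = ∅ := by
      ext x
      simp only [hA, mem_preimage, mem_Iic, mem_empty_iff_false, iff_false, not_le]
      exact lt_of_lt_of_le ht (hG0 x)
    rw [hAe, measure_empty, Eq.comm, ENNReal.ofReal_eq_zero]
    exact (min_le_left t 1).trans ht.le
  rcases lt_or_ge t 1 with ht1 | ht1
  · -- 0 ≤ t < 1
    have hmin : min t 1 = t := min_eq_left ht1.le
    rw [hmin]
    by_cases hAne : A.Nonempty
    · -- A nonempty; it is closed and bounded above
      have hAclosed : IsClosed A := isClosed_Iic.preimage hGcont
      have hAbdd : BddAbove A := by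
        obtain ⟨x, hx⟩ : ∃ x, t < G x := by
          have := htop.eventually (eventually_gt_nhds ht1)
          exact this.exists
        refine ⟨x, fun y hy => ?_⟩
        by_contra hxy
        push_neg at hxy
        exact absurd (hGmono hxy.le) (not_le.mpr (lt_of_le_of_lt hy hx))
      set a := sSup A with ha
      have haA : a ∈ A := hAclosed.csSup_mem hAne hAbdd
      have hAIic : A = Iic a := by
        ext x
        constructor
        · exact fun hx => le_csSup hAbdd hx
        · intro hx
          exact le_trans (hGmono hx) haA
      have hGa_le : G a ≤ t := haA
      have hGa_ge : t ≤ G a := by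
        have htend : Tendsto G (𝓝[>] a) (𝓝 (G a)) :=
          (hGcont.tendsto a).mono_left nhdsWithin_le_nhds
        refine ge_of_tendsto htend ?_
        filter_upwards [self_mem_nhdsWithin] with x hx
        by_contra hc
        push_neg at hc
        have : x ∈ A := le_of_lt hc
        rw [hAIic] at this
        exact absurd (mem_Iic.mp this) (not_le.mpr hx)
      rw [hAIic, hν_eq, le_antisymm hGa_le hGa_ge]
    · -- A empty : then t = 0
      rw [not_nonempty_iff_eq_empty] at hAne
      have ht0 : t ≤ 0 := by
        by_contra hc
        push_neg at hc
        obtain ⟨x, hx⟩ : ∃ x, G x < t := (hbot.eventually (eventually_lt_nhds hc)).exists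
        have hxA : x ∈ A := hx.le
        rw [hAne] at hxA
        exact hxA
      have : t = 0 := le_antisymm ht0 ht
      rw [hAne, measure_empty, this, ENNReal.ofReal_zero]
  · -- t ≥ 1 : A = univ
    have hAu : A = univ := by
      ext x
      simp only [hA, mem_preimage, mem_Iic, mem_univ, iff_true]
      exact le_trans (hG1 x) ht1
    rw [hAu, measure_univ, min_eq_right ht1, ENNReal.ofReal_one]
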